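/- Let N ≥ 1 and let (D_i, I_i, R_i), i = 1,…,N, be independent and identically distributed triples of {0,1}-valued random variables on a probability space such that almost surely D_i = 1 implies R_i = 0, and set Y_i = D_i·I_i. Assume P(D_1 = 1) > 0 and P(R_1 = 0) > 0. Then E[(Σ_{i=1}^N Y_i)/(Σ_{i=1}^N D_i) | Σ_{i=1}^N D_i > 0] = P(I_1 = 1 | R_1 = 0) holds if and only if P(I_1 = 1 | D_1 = 1) = P(I_1 = 1 | R_1 = 0), i.e., if and only if D_1 and I_1 are conditionally independent given the event {R_1 = 0} (MITI). -/

import Mathlib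

open MeasureTheory ProbabilityTheory

section Aux

variable {Ω : Type*} [MeasurableSpace Ω] (μ : Measure Ω) [IsProbabilityMeasure μ]

/-- Auxiliary lemma: the conditional expectation of the TPR equals
`P(I₁ = 1 | D₁ = 1)`, unconditionally. -/
lemma stmt0_aux
    (N : ℕ) (hN : 0 < N)
    (D I R : Fin N → Ω → ℝ)
    (hDmeas : ∀ i, Measurable (D i)) (hImeas : ∀ i, Measurable (I i))
    (hRmeas : ∀ i, Measurable (R i))
    (hD01 : ∀ i ω, D i ω = 0 ∨ D i ω = 1)
    (hI01 : ∀ i ω, I i ω = 0 ∨ I i ω = 1)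
    (hindep : iIndepFun
      (fun i ω => (D i ω, I i ω, R i ω)) μ)
    (hident : ∀ i j, IdentDistrib (fun ω => (D i ω, I i ω, R i ω))
      (fun ω => (D j ω, I j ω, R j ω)) μ μ)
    (hD1 : 0 < μ {ω | D ⟨0, hN⟩ ω = 1}) :
    (∫ ω, (∑ i, D i ω * I i ω) / (∑ i, D i ω)
        ∂(μ[|{ω | 0 < ∑ i, D i ω}]))
      = (μ[|{ω | D ⟨0, hN⟩ ω = 1}] {ω | I ⟨0, hN⟩ ω = 1}).toReal := by
  classical
  set i0 : Fin N := ⟨0, hN⟩ with hi0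
  set f : Fin N → Ω → ℝ × ℝ × ℝ := fun i ω => (D i ω, I i ω, R i ω) with hf
  have hfmeas : ∀ i, Measurable (f i) :=
    fun i => (hDmeas i).prodMk ((hImeas i).prodMk (hRmeas i))
  have hDnn : ∀ i ω, 0 ≤ D i ω := by
    intro i ω; rcases hD01 i ω with h | h <;> simp [h]
  have hDle : ∀ i ω, D i ω ≤ 1 := by
    intro i ω; rcases hD01 i ω with h | h <;> simp [h]
  have hSnn : ∀ ω, 0 ≤ ∑ i, D i ω := fun ω => Finset.sum_nonneg fun i _ => hDnn i ω
  set A : Set Ω := {ω | 0 < ∑ i, D i ω} with hA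
  have hSmeas : Measurable fun ω => ∑ i, D i ω :=
    Finset.measurable_sum _ fun i _ => hDmeas i
  have hAmeas : MeasurableSet A := measurableSet_lt measurable_const hSmeas
  have hsub : {ω | D i0 ω = 1} ⊆ A := by
    intro ω hω
    have h1 : D i0 ω ≤ ∑ i, D i ω :=
      Finset.single_le_sum (fun i _ => hDnn i ω) (Finset.mem_univ i0)
    have : (1 : ℝ) ≤ ∑ i, D i ω := by rw [← hω]; exact h1
    exact lt_of_lt_of_le one_pos this
  have hμA : 0 < μ A := lt_of_lt_of_le hD1 (measure_mono hsub)
  have hμAne : μ A ≠ 0 := hμA.ne'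
  have hμAtop : μ A ≠ ⊤ := measure_ne_top μ A
  -- the integrand vanishes outside A
  have hzero : ∀ ω ∉ A, (∑ i, D i ω * I i ω) / (∑ i, D i ω) = 0 := by
    intro ω hω
    have hS0 : ∑ i, D i ω = 0 := le_antisymm (not_lt.1 hω) (hSnn ω)
    have hall : ∀ i ∈ Finset.univ, D i ω = 0 :=
      (Finset.sum_eq_zero_iff_of_nonneg fun i _ => hDnn i ω).1 hS0
    have hnum : ∑ i, D i ω * I i ω = 0 :=
      Finset.sum_eq_zero fun i hi => by rw [hall i hi, zero_mul]
    rw [hnum, zero_div]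
  -- the auxiliary "rest" functions
  set Z : Fin N → Ω → ℝ := fun i ω => (1 + ∑ j ∈ Finset.univ.erase i, D j ω)⁻¹ with hZ
  have hrestnn : ∀ i ω, 0 ≤ ∑ j ∈ Finset.univ.erase i, D j ω :=
    fun i ω => Finset.sum_nonneg fun j _ => hDnn j ω
  have hZnn : ∀ i ω, 0 ≤ Z i ω := fun i ω => inv_nonneg.2 (by linarith [hrestnn i ω])
  have hZle : ∀ i ω, Z i ω ≤ 1 := by
    intro i ω
    have h1 : (1:ℝ) ≤ 1 + ∑ j ∈ Finset.univ.erase i, D j ω := by linarith [hrestnn i ω]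
    calc Z i ω ≤ 1⁻¹ := by
          apply inv_anti₀ one_pos h1
      _ = 1 := inv_one
  have hZmeas : ∀ i, Measurable (Z i) :=
    fun i => (measurable_const.add (Finset.measurable_sum _ fun j _ => hDmeas j)).inv
  have hsplit : ∀ i ω, ∑ j, D j ω = D i ω + ∑ j ∈ Finset.univ.erase i, D j ω :=
    fun i ω => (Finset.add_sum_erase _ _ (Finset.mem_univ i)).symm
  have hterm1 : ∀ i ω, D i ω * I i ω / (∑ j, D j ω) = (D i ω * I i ω) * Z i ω := by
    intro i ω
    rcases hD01 i ω with h | h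
    · rw [h]; simp
    · rw [hsplit i ω, h, hZ]; rw [div_eq_mul_inv]
  have hterm2 : ∀ i ω, D i ω / (∑ j, D j ω) = D i ω * Z i ω := by
    intro i ω
    rcases hD01 i ω with h | h
    · rw [h]; simp
    · rw [hsplit i ω, h, hZ]; rw [div_eq_mul_inv]
  -- integrability helper
  have hint : ∀ (g : Ω → ℝ), Measurable g → (∀ ω, ‖g ω‖ ≤ 1) → Integrable g μ := by
    intro g hg hb
    exact (integrable_const (1:ℝ)).mono' hg.aestronglyMeasurable (Filter.Eventually.of_forall hb)
  have hXbd : ∀ i ω, ‖D i ω * I i ω‖ ≤ 1 := by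
    intro i ω
    rcases hD01 i ω with h | h <;> rcases hI01 i ω with h' | h' <;> simp [h, h']
  have hintX : ∀ i, Integrable (fun ω => D i ω * I i ω) μ :=
    fun i => hint _ ((hDmeas i).mul (hImeas i)) (hXbd i)
  have hintZ : ∀ i, Integrable (Z i) μ := by
    intro i
    refine hint _ (hZmeas i) fun ω => ?_
    rw [Real.norm_eq_abs, abs_of_nonneg (hZnn i ω)]
    exact hZle i ω
  have hintD : ∀ i, Integrable (D i) μ := by
    intro i
    refine hint _ (hDmeas i) fun ω => ?_
    rw [Real.norm_eq_abs, abs_of_nonneg (hDnn i ω)]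
    exact hDle i ω
  -- independence of (D i * I i) and Z i, and of D i and Z i
  have hindepZ : ∀ i, IndepFun (fun ω => D i ω * I i ω) (Z i) μ ∧ IndepFun (D i) (Z i) μ := by
    intro i
    have hdisj : Disjoint ({i} : Finset (Fin N)) (Finset.univ.erase i) := by
      simp [Finset.disjoint_left]
    have hbase := hindep.indepFun_finset {i} (Finset.univ.erase i) hdisj hfmeas
    set φ1 : (({i} : Finset (Fin N)) → ℝ × ℝ × ℝ) → ℝ :=
      fun v => (v ⟨i, Finset.mem_singleton_self i⟩).1 * (v ⟨i, Finset.mem_singleton_self i⟩).2.1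
      with hφ1
    set φ2 : (({i} : Finset (Fin N)) → ℝ × ℝ × ℝ) → ℝ :=
      fun v => (v ⟨i, Finset.mem_singleton_self i⟩).1 with hφ2
    set ψ : (↥(Finset.univ.erase i) → ℝ × ℝ × ℝ) → ℝ :=
      fun v => (1 + ∑ j, (v j).1)⁻¹ with hψ
    have hφ1m : Measurable φ1 :=
      ((measurable_pi_apply _).fst).mul ((measurable_pi_apply _).snd.fst)
    have hφ2m : Measurable φ2 := (measurable_pi_apply _).fst
    have hψm : Measurable ψ :=
      (measurable_const.add (Finset.measurable_sum _ fun j _ =>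
        (measurable_pi_apply j).fst)).inv
    have key1 := hbase.comp hφ1m hψm
    have key2 := hbase.comp hφ2m hψm
    have heq1 : (φ1 ∘ fun a (j : ({i} : Finset (Fin N))) => f j a)
        = fun ω => D i ω * I i ω := rfl
    have heq2 : (φ2 ∘ fun a (j : ({i} : Finset (Fin N))) => f j a) = D i := rfl
    have heqψ : (ψ ∘ fun a (j : (Finset.univ.erase i : Finset (Fin N))) => f j a) = Z i := by
      funext ω
      simp only [Function.comp_apply, hψ, hZ, hf]
      congr 1
      congr 1
      exact Finset.sum_coe_sort (Finset.univ.erase i) (fun j => D j ω)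
    rw [heq1, heqψ] at key1
    rw [heq2, heqψ] at key2
    exact ⟨key1, key2⟩
  -- expectations of indicators
  set B : Fin N → Set Ω := fun i => {ω | D i ω = 1} ∩ {ω | I i ω = 1} with hB
  have hBmeas : ∀ i, MeasurableSet (B i) :=
    fun i => ((hDmeas i) (measurableSet_singleton 1)).inter
      ((hImeas i) (measurableSet_singleton 1))
  have hDset : ∀ i, MeasurableSet {ω | D i ω = 1} :=
    fun i => (hDmeas i) (measurableSet_singleton 1)
  have hEX : ∀ i, ∫ ω, D i ω * I i ω ∂μ = (μ (B i)).toReal := by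
    intro i
    have : (fun ω => D i ω * I i ω) = (B i).indicator (fun _ => (1:ℝ)) := by
      funext ω
      rw [Set.indicator_apply]
      by_cases hmem : ω ∈ B i
      · rw [if_pos hmem]
        obtain ⟨h1, h2⟩ := hmem
        simp only [Set.mem_setOf_eq] at h1 h2
        rw [h1, h2, one_mul]
      · rw [if_neg hmem]
        rcases hD01 i ω with h | h
        · rw [h, zero_mul]
        · rcases hI01 i ω with h' | h'
          · rw [h', mul_zero]
          · exact absurd ⟨h, h'⟩ hmem
    rw [this, integral_indicator_const (1:ℝ) (hBmeas i), smul_eq_mul, mul_one]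
    rfl
  have hED : ∀ i, ∫ ω, D i ω ∂μ = (μ {ω | D i ω = 1}).toReal := by
    intro i
    have : (fun ω => D i ω) = ({ω | D i ω = 1}).indicator (fun _ => (1:ℝ)) := by
      funext ω
      rw [Set.indicator_apply]
      by_cases hmem : ω ∈ {ω | D i ω = 1}
      · rw [if_pos hmem]; exact hmem
      · rw [if_neg hmem]
        rcases hD01 i ω with h | h
        · exact h
        · exact absurd h hmem
    rw [this, integral_indicator_const (1:ℝ) (hDset i), smul_eq_mul, mul_one]
    rfl
  -- identical distribution transfers
  have hBident : ∀ i, μ (B i) = μ (B i0) := by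
    intro i
    have hs : MeasurableSet {x : ℝ × ℝ × ℝ | x.1 = 1 ∧ x.2.1 = 1} := by
      have : {x : ℝ × ℝ × ℝ | x.1 = 1 ∧ x.2.1 = 1}
          = Prod.fst ⁻¹' {1} ∩ (fun x : ℝ × ℝ × ℝ => x.2.1) ⁻¹' {1} := by
        ext x; simp
      rw [this]
      exact (measurable_fst (measurableSet_singleton 1)).inter
        ((measurable_fst.comp measurable_snd) (measurableSet_singleton 1))
    have h := (hident i i0).measure_mem_eq hs
    have hp1 : f i ⁻¹' {x : ℝ × ℝ × ℝ | x.1 = 1 ∧ x.2.1 = 1} = B i := by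
      ext ω; simp [hf, hB]
    have hp2 : f i0 ⁻¹' {x : ℝ × ℝ × ℝ | x.1 = 1 ∧ x.2.1 = 1} = B i0 := by
      ext ω; simp [hf, hB]
    rw [hp1, hp2] at h
    exact h
  have hDident : ∀ i, μ {ω | D i ω = 1} = μ {ω | D i0 ω = 1} := by
    intro i
    have hs : MeasurableSet (Prod.fst ⁻¹' {(1:ℝ)} : Set (ℝ × ℝ × ℝ)) :=
      measurable_fst (measurableSet_singleton 1)
    have h := (hident i i0).measure_mem_eq hs
    have hp1 : f i ⁻¹' (Prod.fst ⁻¹' {(1:ℝ)}) = {ω | D i ω = 1} := by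
      ext ω; simp [hf]
    have hp2 : f i0 ⁻¹' (Prod.fst ⁻¹' {(1:ℝ)}) = {ω | D i0 ω = 1} := by
      ext ω; simp [hf]
    rw [hp1, hp2] at h
    exact h
  -- abbreviations
  set a : ℝ := (μ (B i0)).toReal with ha
  set b : ℝ := (μ {ω | D i0 ω = 1}).toReal with hb'
  have hbpos : 0 < b := ENNReal.toReal_pos hD1.ne' (measure_ne_top _ _)
  set p : ℝ := a / b with hp
  -- per-index integral identities
  have hterm : ∀ i, ∫ ω, D i ω * I i ω / (∑ j, D j ω) ∂μ
      = p * ∫ ω, D i ω / (∑ j, D j ω) ∂μ := by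
    intro i
    have e1 : ∫ ω, D i ω * I i ω / (∑ j, D j ω) ∂μ
        = (∫ ω, D i ω * I i ω ∂μ) * ∫ ω, Z i ω ∂μ := by
      calc ∫ ω, D i ω * I i ω / (∑ j, D j ω) ∂μ
          = ∫ ω, (D i ω * I i ω) * Z i ω ∂μ := by
            exact integral_congr_ae (Filter.Eventually.of_forall fun ω => hterm1 i ω)
        _ = (∫ ω, D i ω * I i ω ∂μ) * ∫ ω, Z i ω ∂μ :=
            (hindepZ i).1.integral_fun_mul_eq_mul_integral (hintX i).aestronglyMeasurable (hintZ i).aestronglyMeasurable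
    have e2 : ∫ ω, D i ω / (∑ j, D j ω) ∂μ
        = (∫ ω, D i ω ∂μ) * ∫ ω, Z i ω ∂μ := by
      calc ∫ ω, D i ω / (∑ j, D j ω) ∂μ
          = ∫ ω, D i ω * Z i ω ∂μ :=
            integral_congr_ae (Filter.Eventually.of_forall fun ω => hterm2 i ω)
        _ = (∫ ω, D i ω ∂μ) * ∫ ω, Z i ω ∂μ :=
            (hindepZ i).2.integral_fun_mul_eq_mul_integral (hintD i).aestronglyMeasurable (hintZ i).aestronglyMeasurable
    rw [e1, e2, hEX i, hED i, hBident i, hDident i, ← ha, ← hb', hp]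
    field_simp
  -- integrability of the summands
  have hintterm1 : ∀ i, Integrable (fun ω => D i ω * I i ω / (∑ j, D j ω)) μ := by
    intro i
    have : (fun ω => D i ω * I i ω / (∑ j, D j ω))
        = fun ω => (D i ω * I i ω) * Z i ω := funext fun ω => hterm1 i ω
    rw [this]
    exact hint _ (((hDmeas i).mul (hImeas i)).mul (hZmeas i)) fun ω => by
      rw [norm_mul]
      calc ‖D i ω * I i ω‖ * ‖Z i ω‖ ≤ 1 * 1 := by
            apply mul_le_mul (hXbd i ω) _ (norm_nonneg _) zero_le_one
            rw [Real.norm_eq_abs, abs_of_nonneg (hZnn i ω)]; exact hZle i ω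
        _ = 1 := one_mul 1
  have hintterm2 : ∀ i, Integrable (fun ω => D i ω / (∑ j, D j ω)) μ := by
    intro i
    have : (fun ω => D i ω / (∑ j, D j ω))
        = fun ω => D i ω * Z i ω := funext fun ω => hterm2 i ω
    rw [this]
    exact hint _ ((hDmeas i).mul (hZmeas i)) fun ω => by
      rw [norm_mul]
      calc ‖D i ω‖ * ‖Z i ω‖ ≤ 1 * 1 := by
            apply mul_le_mul _ _ (norm_nonneg _) zero_le_one
            · rw [Real.norm_eq_abs, abs_of_nonneg (hDnn i ω)]; exact hDle i ω
            · rw [Real.norm_eq_abs, abs_of_nonneg (hZnn i ω)]; exact hZle i ω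
        _ = 1 := one_mul 1
  -- the full integral over μ
  have hSoverS : ∀ ω, (∑ i, D i ω) / (∑ i, D i ω) = A.indicator (fun _ => (1:ℝ)) ω := by
    intro ω
    rw [Set.indicator_apply]
    by_cases hω : ω ∈ A
    · rw [if_pos hω]
      exact div_self (ne_of_gt hω)
    · rw [if_neg hω]
      have hS0 : ∑ i, D i ω = 0 := le_antisymm (not_lt.1 hω) (hSnn ω)
      rw [hS0, div_zero]
  have hfull : ∫ ω, (∑ i, D i ω * I i ω) / (∑ i, D i ω) ∂μ = p * (μ A).toReal := by
    calc ∫ ω, (∑ i, D i ω * I i ω) / (∑ i, D i ω) ∂μ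
        = ∫ ω, ∑ i, D i ω * I i ω / (∑ j, D j ω) ∂μ := by
          apply integral_congr_ae (Filter.Eventually.of_forall fun ω => ?_)
          rw [Finset.sum_div]
      _ = ∑ i, ∫ ω, D i ω * I i ω / (∑ j, D j ω) ∂μ :=
          integral_finset_sum _ fun i _ => hintterm1 i
      _ = ∑ i, p * ∫ ω, D i ω / (∑ j, D j ω) ∂μ := by
          exact Finset.sum_congr rfl fun i _ => hterm i
      _ = p * ∑ i, ∫ ω, D i ω / (∑ j, D j ω) ∂μ := by rw [Finset.mul_sum]
      _ = p * ∫ ω, ∑ i, D i ω / (∑ j, D j ω) ∂μ := by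
          rw [integral_finset_sum _ fun i _ => hintterm2 i]
      _ = p * ∫ ω, A.indicator (fun _ => (1:ℝ)) ω ∂μ := by
          congr 1
          apply integral_congr_ae (Filter.Eventually.of_forall fun ω => ?_)
          rw [← Finset.sum_div]
          exact hSoverS ω
      _ = p * (μ A).toReal := by
          rw [integral_indicator_const (1:ℝ) hAmeas, smul_eq_mul, mul_one]
          rfl
  -- the conditional integral
  have hcond : ∫ ω, (∑ i, D i ω * I i ω) / (∑ i, D i ω) ∂(μ[|A]) = p := by
    rw [ProbabilityTheory.cond, integral_smul_measure,
      setIntegral_eq_integral_of_forall_compl_eq_zero hzero, hfull]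
    rw [ENNReal.toReal_inv, smul_eq_mul]
    have hAt : (μ A).toReal ≠ 0 := (ENNReal.toReal_pos hμAne hμAtop).ne'
    field_simp
  -- identify p with the conditional probability
  have hpcond : p = (μ[|{ω | D i0 ω = 1}] {ω | I i0 ω = 1}).toReal := by
    rw [cond_apply (hDset i0) μ {ω | I i0 ω = 1}]
    have hset : {ω | D i0 ω = 1} ∩ {ω | I i0 ω = 1} = B i0 := rfl
    rw [hset, ENNReal.toReal_mul, ENNReal.toReal_inv, ← ha, ← hb', hp,
      inv_mul_eq_div]
  rw [hcond, hpcond]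

end Aux

/-- Lemma 1 of the paper: under perfect tests and i.i.d. joint processes
between individuals, the test-positive rate is a marginally unbiased estimator of
prevalence in the non-removed population if and only if MITI holds, i.e., iff
`P(I₁ = 1 | D₁ = 1) = P(I₁ = 1 | R₁ = 0)`. -/
theorem stmt0
    {Ω : Type*} [MeasurableSpace Ω] (μ : Measure Ω) [IsProbabilityMeasure μ]
    (N : ℕ) (hN : 0 < N)
    (D I R : Fin N → Ω → ℝ)
    (hDmeas : ∀ i, Measurable (D i)) (hImeas : ∀ i, Measurable (I i))
    (hRmeas : ∀ i, Measurable (R i))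
    (hD01 : ∀ i ω, D i ω = 0 ∨ D i ω = 1)
    (hI01 : ∀ i ω, I i ω = 0 ∨ I i ω = 1)
    (hR01 : ∀ i ω, R i ω = 0 ∨ R i ω = 1)
    (hindep : iIndepFun
      (fun i ω => (D i ω, I i ω, R i ω)) μ)
    (hident : ∀ i j, IdentDistrib (fun ω => (D i ω, I i ω, R i ω))
      (fun ω => (D j ω, I j ω, R j ω)) μ μ)
    (hDR : ∀ᵐ ω ∂μ, ∀ i, D i ω = 1 → R i ω = 0)
    (hD1 : 0 < μ {ω | D ⟨0, hN⟩ ω = 1})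
    (hR0 : 0 < μ {ω | R ⟨0, hN⟩ ω = 0}) :
    (∫ ω, (∑ i, D i ω * I i ω) / (∑ i, D i ω)
        ∂(μ[|{ω | 0 < ∑ i, D i ω}]))
      = (μ[|{ω | R ⟨0, hN⟩ ω = 0}] {ω | I ⟨0, hN⟩ ω = 1}).toReal
    ↔ (μ[|{ω | D ⟨0, hN⟩ ω = 1}] {ω | I ⟨0, hN⟩ ω = 1}).toReal
      = (μ[|{ω | R ⟨0, hN⟩ ω = 0}] {ω | I ⟨0, hN⟩ ω = 1}).toReal := by
  rw [stmt0_aux μ N hN D I R hDmeas hImeas hRmeas hD01 hI01 hindep hident hD1]
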